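/- Let k be a field, let V₀, V₁, V₂, V₃ be finite-dimensional k-vector spaces, let h : V₁ → V₀ be a bijective k-linear map, let f : V₂ → V₁ and g : V₃ → V₁ be injective k-linear maps with f(V₂) ∩ g(V₃) = {0}, and let e₀, e₁, e₂, e₃ be natural numbers with e₂ + e₃ ≤ e₁ ≤ e₀. Then there is a bijection between: (1) the set of quadruples (U₀, U₁, U₂, U₃) of subspaces Uᵢ ≤ Vᵢ with dim Uᵢ = eᵢ for i = 0,…,3, f(U₂) ⊆ U₁, g(U₃) ⊆ U₁ and h(U₁) ⊆ U₀; and (2) the product of the set of triples (U₀, U₂, U₃) of subspaces with dim U₀ = e₀, dim U₂ = e₂, dim U₃ = e₃, h(f(U₂)) ⊆ U₀ and h(g(U₃)) ⊆ U₀, with the set of (e₁ − e₂ − e₃)-dimensional subspaces of k^{e₀ − e₂ − e₃}. -/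
import Mathlib


open Module Submodule

section Aux

variable {k : Type*} [Field k] {M N : Type*} [AddCommGroup M] [Module k M]
  [AddCommGroup N] [Module k N]

/-- Grassmannians of isomorphic spaces are in bijection. -/
noncomputable def grEquiv (e : M ≃ₗ[k] N) (d : ℕ) :
    {W : Submodule k M // finrank k W = d} ≃ {W : Submodule k N // finrank k W = d} :=
  Equiv.subtypeEquiv (Submodule.orderIsoMapComap e).toEquiv
    (fun W => by
      rw [show (Submodule.orderIsoMapComap e).toEquiv W = W.map (e : M →ₗ[k] N) from rfl,
        LinearEquiv.finrank_map_eq])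

lemma finrank_map_mkQ_add [FiniteDimensional k M] (p U : Submodule k M) (hpU : p ≤ U) :
    finrank k (U.map p.mkQ) + finrank k p = finrank k U := by
  have h1 : LinearMap.range (p.mkQ ∘ₗ U.subtype) = U.map p.mkQ := by
    rw [LinearMap.range_comp, Submodule.range_subtype]
  have h2 : LinearMap.ker (p.mkQ ∘ₗ U.subtype) = comap U.subtype p := by
    rw [LinearMap.ker_comp, Submodule.ker_mkQ]
  have h3 := LinearMap.finrank_range_add_finrank_ker (p.mkQ ∘ₗ U.subtype)
  rw [h1, h2] at h3
  rwa [(Submodule.comapSubtypeEquivOfLe hpU).finrank_eq] at h3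

/-- Submodules of dimension `m` between `S` and `T` correspond to
submodules of dimension `m - s` of the quotient `T / S`. -/
noncomputable def intervalEquiv [FiniteDimensional k M] (T S : Submodule k M) (hST : S ≤ T)
    (s m : ℕ) (hs : finrank k S = s) (hsm : s ≤ m) :
    {U : Submodule k M // finrank k U = m ∧ S ≤ U ∧ U ≤ T} ≃
      {W : Submodule k (↥T ⧸ (S.comap T.subtype)) // finrank k W = m - s} where
  toFun U := ⟨(U.1.comap T.subtype).map (S.comap T.subtype).mkQ, by
    obtain ⟨U, hU, hSU, hUT⟩ := U
    show finrank k ((U.comap T.subtype).map (S.comap T.subtype).mkQ) = m - s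
    have hle : S.comap T.subtype ≤ U.comap T.subtype := comap_mono hSU
    have h1 := finrank_map_mkQ_add (S.comap T.subtype) (U.comap T.subtype) hle
    have h2 : finrank k (S.comap T.subtype) = s := by
      rw [(Submodule.comapSubtypeEquivOfLe hST).finrank_eq, hs]
    have h3 : finrank k (U.comap T.subtype) = m := by
      rw [(Submodule.comapSubtypeEquivOfLe hUT).finrank_eq, hU]
    omega⟩
  invFun W := ⟨(W.1.comap (S.comap T.subtype).mkQ).map T.subtype, by
    obtain ⟨W, hW⟩ := W
    have hSU' : S.comap T.subtype ≤ W.comap (S.comap T.subtype).mkQ := by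
      intro x hx
      simp only [Submodule.mem_comap]
      rw [show (S.comap T.subtype).mkQ x = 0 from (Submodule.Quotient.mk_eq_zero _).mpr hx]
      exact W.zero_mem
    have hmap : (W.comap (S.comap T.subtype).mkQ).map (S.comap T.subtype).mkQ = W :=
      Submodule.map_comap_eq_of_surjective (Submodule.mkQ_surjective _) W
    have h1 := finrank_map_mkQ_add (S.comap T.subtype) (W.comap (S.comap T.subtype).mkQ) hSU'
    rw [hmap] at h1
    have h2 : finrank k (S.comap T.subtype) = s := by
      rw [(Submodule.comapSubtypeEquivOfLe hST).finrank_eq, hs]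
    have h4 : finrank k ((W.comap (S.comap T.subtype).mkQ).map T.subtype)
        = finrank k (W.comap (S.comap T.subtype).mkQ) :=
      ((Submodule.equivMapOfInjective T.subtype (Submodule.injective_subtype T)
        (W.comap (S.comap T.subtype).mkQ)).symm.finrank_eq)
    refine ⟨by rw [h4]; omega, ?_, ?_⟩
    · calc S = (S.comap T.subtype).map T.subtype := by
              rw [Submodule.map_comap_subtype, inf_eq_right.mpr hST]
        _ ≤ _ := map_mono hSU'
    · exact Submodule.map_subtype_le T _⟩
  left_inv := fun U => Subtype.ext (by
    obtain ⟨U, hU, hSU, hUT⟩ := U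
    show ((((U.comap T.subtype).map (S.comap T.subtype).mkQ).comap
        (S.comap T.subtype).mkQ).map T.subtype) = U
    rw [Submodule.comap_map_mkQ, sup_eq_right.mpr (comap_mono hSU),
      Submodule.map_comap_subtype, inf_eq_right.mpr hUT])
  right_inv := fun W => Subtype.ext (by
    obtain ⟨W, hW⟩ := W
    show ((((W.comap (S.comap T.subtype).mkQ).map T.subtype).comap T.subtype).map
        (S.comap T.subtype).mkQ) = W
    rw [Submodule.comap_map_eq, Submodule.ker_subtype, sup_bot_eq,
      Submodule.map_comap_eq_of_surjective (Submodule.mkQ_surjective _)])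

end Aux

/-- Reduction of type one (second instance): given a bijective map `h : V₁ → V₀`
and injective maps `f : V₂ → V₁`, `g : V₃ → V₁` whose images intersect trivially,
and `e₂ + e₃ ≤ e₁ ≤ e₀`, the set of quadruples of subspaces of dimensions
`(e₀, e₁, e₂, e₃)` compatible with `f`, `g`, `h` is in bijection with the product
of the set of compatible triples `(U₀, U₂, U₃)` for the composed maps `h ∘ f`,
`h ∘ g` with the Grassmannian of `(e₁ − e₂ − e₃)`-dimensional subspaces of
`k^{e₀ − e₂ − e₃}`. -/
theorem stmt2 (k : Type*) [Field k]
    (V₀ V₁ V₂ V₃ : Type*)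
    [AddCommGroup V₀] [Module k V₀] [FiniteDimensional k V₀]
    [AddCommGroup V₁] [Module k V₁] [FiniteDimensional k V₁]
    [AddCommGroup V₂] [Module k V₂] [FiniteDimensional k V₂]
    [AddCommGroup V₃] [Module k V₃] [FiniteDimensional k V₃]
    (h : V₁ →ₗ[k] V₀) (f : V₂ →ₗ[k] V₁) (g : V₃ →ₗ[k] V₁)
    (hh : Function.Bijective h) (hf : Function.Injective f) (hg : Function.Injective g)
    (hfg : LinearMap.range f ⊓ LinearMap.range g = ⊥)
    (e₀ e₁ e₂ e₃ : ℕ) (h23 : e₂ + e₃ ≤ e₁) (h10 : e₁ ≤ e₀) :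
    Nonempty (
      {U : Submodule k V₀ × Submodule k V₁ × Submodule k V₂ × Submodule k V₃ //
          finrank k ↥U.1 = e₀ ∧ finrank k ↥U.2.1 = e₁ ∧
          finrank k ↥U.2.2.1 = e₂ ∧ finrank k ↥U.2.2.2 = e₃ ∧
          U.2.2.1.map f ≤ U.2.1 ∧ U.2.2.2.map g ≤ U.2.1 ∧ U.2.1.map h ≤ U.1}
        ≃
      ({U : Submodule k V₀ × Submodule k V₂ × Submodule k V₃ //
          finrank k ↥U.1 = e₀ ∧ finrank k ↥U.2.1 = e₂ ∧ finrank k ↥U.2.2 = e₃ ∧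
          U.2.1.map (h ∘ₗ f) ≤ U.1 ∧ U.2.2.map (h ∘ₗ g) ≤ U.1}
        × {W : Submodule k (Fin (e₀ - e₂ - e₃) → k) // finrank k ↥W = e₁ - e₂ - e₃})) := by
  classical
  set B := {U : Submodule k V₀ × Submodule k V₂ × Submodule k V₃ //
      finrank k ↥U.1 = e₀ ∧ finrank k ↥U.2.1 = e₂ ∧ finrank k ↥U.2.2 = e₃ ∧
      U.2.1.map (h ∘ₗ f) ≤ U.1 ∧ U.2.2.map (h ∘ₗ g) ≤ U.1} with hB
  set T : B → Submodule k V₁ := fun b => b.1.1.comap h with hT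
  set S : B → Submodule k V₁ := fun b => b.1.2.1.map f ⊔ b.1.2.2.map g with hS
  -- Key facts about T and S
  have hST : ∀ b : B, S b ≤ T b := by
    rintro ⟨⟨U₀, U₂, U₃⟩, h0, h2, h3, hcf, hcg⟩
    show U₂.map f ⊔ U₃.map g ≤ U₀.comap h
    refine sup_le ?_ ?_
    · rw [Submodule.map_le_iff_le_comap, ← Submodule.comap_comp]
      exact Submodule.map_le_iff_le_comap.mp hcf
    · rw [Submodule.map_le_iff_le_comap, ← Submodule.comap_comp]
      exact Submodule.map_le_iff_le_comap.mp hcg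
  have hfinS : ∀ b : B, finrank k (S b) = e₂ + e₃ := by
    rintro ⟨⟨U₀, U₂, U₃⟩, h0, h2, h3, hcf, hcg⟩
    show finrank k ↥(U₂.map f ⊔ U₃.map g) = e₂ + e₃
    have hinf : U₂.map f ⊓ U₃.map g = ⊥ := by
      rw [← le_bot_iff, ← hfg]
      exact inf_le_inf LinearMap.map_le_range LinearMap.map_le_range
    have key := Submodule.finrank_sup_add_finrank_inf_eq (U₂.map f) (U₃.map g)
    rw [hinf, finrank_bot, add_zero,
      ← (Submodule.equivMapOfInjective f hf U₂).finrank_eq,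
      ← (Submodule.equivMapOfInjective g hg U₃).finrank_eq] at key
    simp only at h2 h3
    rw [key, h2, h3]
  have hfinT : ∀ b : B, finrank k (T b) = e₀ := by
    rintro ⟨⟨U₀, U₂, U₃⟩, h0, h2, h3, hcf, hcg⟩
    show finrank k (U₀.comap h) = e₀
    have key : finrank k (U₀.comap ((LinearEquiv.ofBijective h hh : V₁ →ₗ[k] V₀))) = e₀ :=
      ((LinearEquiv.ofSubmodule' (LinearEquiv.ofBijective h hh) U₀).finrank_eq).trans h0
    exact key
  -- finrank of the quotient
  have hfinQ : ∀ b : B, finrank k (↥(T b) ⧸ ((S b).comap (T b).subtype)) = e₀ - e₂ - e₃ := by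
    intro b
    have h1 := Submodule.finrank_quotient_add_finrank ((S b).comap (T b).subtype)
    have h2 : finrank k ((S b).comap (T b).subtype) = e₂ + e₃ := by
      rw [(Submodule.comapSubtypeEquivOfLe (hST b)).finrank_eq, hfinS b]
    rw [h2, hfinT b] at h1
    omega
  have hiso : ∀ b : B,
      Nonempty ((↥(T b) ⧸ ((S b).comap (T b).subtype)) ≃ₗ[k] (Fin (e₀ - e₂ - e₃) → k)) :=
    fun b => FiniteDimensional.nonempty_linearEquiv_of_finrank_eq
      (by rw [hfinQ b, Module.finrank_fin_fun])
  refine ⟨?_⟩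
  refine Equiv.trans (β := Σ b : B,
      {U₁ : Submodule k V₁ // finrank k U₁ = e₁ ∧ S b ≤ U₁ ∧ U₁ ≤ T b}) ?_ ?_
  · -- repackaging quadruples as (triple, U₁)
    refine ⟨fun a => ⟨⟨(a.1.1, a.1.2.2.1, a.1.2.2.2), ?_⟩, ⟨a.1.2.1, ?_⟩⟩,
      fun x => ⟨(x.1.1.1, x.2.1, x.1.1.2.1, x.1.1.2.2), ?_⟩, fun a => rfl, fun x => rfl⟩
    · obtain ⟨⟨U₀, U₁, U₂, U₃⟩, h0, h1, h2, h3, hmf, hmg, hmh⟩ := a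
      refine ⟨h0, h2, h3, ?_, ?_⟩
      · show U₂.map (h ∘ₗ f) ≤ U₀
        rw [Submodule.map_comp]
        exact le_trans (Submodule.map_mono hmf) hmh
      · show U₃.map (h ∘ₗ g) ≤ U₀
        rw [Submodule.map_comp]
        exact le_trans (Submodule.map_mono hmg) hmh
    · obtain ⟨⟨U₀, U₁, U₂, U₃⟩, h0, h1, h2, h3, hmf, hmg, hmh⟩ := a
      exact ⟨h1, sup_le hmf hmg, Submodule.map_le_iff_le_comap.mp hmh⟩
    · obtain ⟨⟨⟨U₀, U₂, U₃⟩, h0, h2, h3, hcf, hcg⟩, U₁, h1, hSU, hUT⟩ := x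
      exact ⟨h0, h1, h2, h3, le_trans le_sup_left hSU, le_trans le_sup_right hSU,
        Submodule.map_le_iff_le_comap.mpr hUT⟩
  · -- fiberwise equivalence, then Σ over a constant family ≃ product
    refine Equiv.trans (Equiv.sigmaCongrRight (fun b => ?_)) (Equiv.sigmaEquivProd _ _)
    refine Equiv.trans
      (intervalEquiv (T b) (S b) (hST b) (e₂ + e₃) e₁ (hfinS b) h23) ?_
    refine Equiv.trans (grEquiv (Classical.choice (hiso b)) (e₁ - (e₂ + e₃))) ?_
    exact Equiv.subtypeEquivRight (fun W => by omega)
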